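/- Let k > 2 be an integer and let Q be the real polynomial of degree 2 that is extremal for (2, {1,2,...,k}). Then for all real x: Q(((k−1)/2)x + (k+1)/2) = T_2(x) when k is odd, and Q(((k−1)/2)x + (k+1)/2) = T_2(x) + (2/(k(k−2)))·(x^2 − 1) when k is even, where T_2(x) = 2x^2 − 1 is the degree 2 Chebyshev polynomial of the first kind. -/

import Mathlib

/-- `Q` is extremal for `(d, {1, 2, ..., k})`: it has degree `d`, is bounded in absolute
value by `1` at the integer points `1, ..., k`, and its leading coefficient is maximal among
all degree `d` polynomials bounded in absolute value by `1` at these points. -/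
def IsExtremalOnRange (d k : ℕ) (Q : Polynomial ℝ) : Prop :=
  Q.natDegree = d ∧ (∀ j : ℕ, 1 ≤ j → j ≤ k → |Q.eval (j : ℝ)| ≤ 1) ∧
    ∀ R : Polynomial ℝ, R.natDegree = d → (∀ j : ℕ, 1 ≤ j → j ≤ k → |R.eval (j : ℝ)| ≤ 1) →
      R.leadingCoeff ≤ Q.leadingCoeff

open Polynomial

private lemma quad_eval (Q : Polynomial ℝ) (h : Q.natDegree = 2) (x : ℝ) :
    Q.eval x = Q.coeff 2 * x ^ 2 + Q.coeff 1 * x + Q.coeff 0 := by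
  rw [Polynomial.eval_eq_sum_range, h]
  simp [Finset.sum_range_succ]
  ring

private lemma quad_lead (Q : Polynomial ℝ) (h : Q.natDegree = 2) :
    Q.leadingCoeff = Q.coeff 2 := by rw [Polynomial.leadingCoeff, h]

private lemma quad_natDegree (A B C : ℝ) (hA : A ≠ 0) :
    (Polynomial.C A * X ^ 2 + Polynomial.C B * X + Polynomial.C C).natDegree = 2 := by
  compute_degree!

private lemma quad_coeff2 (A B C : ℝ) :
    (Polynomial.C A * X ^ 2 + Polynomial.C B * X + Polynomial.C C).coeff 2 = A := by
  simp [coeff_add, coeff_C_mul, coeff_X, coeff_C]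

private lemma quad_eval' (A B C x : ℝ) :
    (Polynomial.C A * X ^ 2 + Polynomial.C B * X + Polynomial.C C).eval x
      = A * x ^ 2 + B * x + C := by
  simp

theorem stmt_18 (k : ℕ) (hk : 2 < k) (Q : Polynomial ℝ) (hQ : IsExtremalOnRange 2 k Q) :
    (Odd k → ∀ x : ℝ,
      Q.eval ((((k : ℝ) - 1) / 2) * x + ((k : ℝ) + 1) / 2) = 2 * x ^ 2 - 1) ∧
    (Even k → ∀ x : ℝ,
      Q.eval ((((k : ℝ) - 1) / 2) * x + ((k : ℝ) + 1) / 2) =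
        (2 * x ^ 2 - 1) + (2 / ((k : ℝ) * ((k : ℝ) - 2))) * (x ^ 2 - 1)) := by
  obtain ⟨hd, hbQ, hmax⟩ := hQ
  set a := Q.coeff 2 with ha
  set b := Q.coeff 1 with hb
  set c := Q.coeff 0 with hc
  constructor
  · -- odd case
    rintro ⟨m, rfl⟩
    have hm : 1 ≤ m := by omega
    have hM : (1:ℝ) ≤ (m:ℝ) := by exact_mod_cast hm
    set A : ℝ := 2 / (m:ℝ)^2 with hAdef
    have hA2 : A * (m:ℝ)^2 = 2 := by rw [hAdef]; exact div_mul_cancel₀ _ (by positivity)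
    have hA0 : 0 < A := by positivity
    -- candidate polynomial  A (t-1)(t-(2m+1)) + 1
    set P : Polynomial ℝ := Polynomial.C A * X ^ 2 + Polynomial.C (-A*(2*(m:ℝ)+2)) * X
        + Polynomial.C (A*(2*(m:ℝ)+1)+1) with hP
    have hPd : P.natDegree = 2 := quad_natDegree _ _ _ (ne_of_gt hA0)
    have hPb : ∀ j : ℕ, 1 ≤ j → j ≤ 2*m+1 → |P.eval (j:ℝ)| ≤ 1 := by
      intro j hj1 hj2
      have h1 : (1:ℝ) ≤ (j:ℝ) := by exact_mod_cast hj1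
      have h2 : (j:ℝ) ≤ 2*(m:ℝ)+1 := by
        have := (Nat.cast_le (α := ℝ)).2 hj2
        push_cast at this; linarith
      rw [hP, quad_eval', abs_le]
      have key : ((j:ℝ)-1)*((2*(m:ℝ)+1) - j) ≤ (m:ℝ)^2 := by
        nlinarith [sq_nonneg ((j:ℝ) - ((m:ℝ)+1))]
      constructor
      · nlinarith [mul_le_mul_of_nonneg_left key hA0.le]
      · nlinarith [mul_nonneg (mul_nonneg hA0.le (by linarith : (0:ℝ) ≤ (j:ℝ)-1))
          (by linarith : (0:ℝ) ≤ 2*(m:ℝ)+1 - j)]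
    have hAa : A ≤ a := by
      have := hmax P hPd hPb
      rwa [quad_lead P hPd, quad_lead Q hd, quad_coeff2] at this
    -- evaluations at 1, m+1, 2m+1
    have e1 := hbQ 1 le_rfl (by omega)
    have e2 := hbQ (m+1) (by omega) (by omega)
    have e3 := hbQ (2*m+1) (by omega) le_rfl
    rw [quad_eval Q hd, abs_le] at e1 e2 e3
    push_cast at e1 e2 e3
    have hkey : a * (2*(m:ℝ)^2) ≤ 4 := by linarith [e1.2, e3.2, e2.1]
    have haA : a = A := by
      refine le_antisymm ?_ hAa
      rw [hAdef, le_div_iff₀ (by positivity : (0:ℝ) < (m:ℝ)^2)]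
      linarith [hkey]
    have ham : a * (m:ℝ)^2 = 2 := by rw [haA]; exact hA2
    have hv1 : a + b + c = 1 := by
      linarith [e1.2, e2.1, e3.2, ham]
    have hv3 : a * (2*(m:ℝ)+1)^2 + b * (2*(m:ℝ)+1) + c = 1 := by
      linarith [e1.2, e2.1, e3.2, ham]
    intro x
    rw [quad_eval Q hd]
    push_cast
    linear_combination ((1-x)/2)*hv1 + ((x+1)/2)*hv3 + (x^2-1)*ham
  · -- even case
    rintro ⟨m, rfl⟩
    have hm : 2 ≤ m := by omega
    have hM : (2:ℝ) ≤ (m:ℝ) := by exact_mod_cast hm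
    have hMM : (0:ℝ) < (m:ℝ) * ((m:ℝ)-1) := by nlinarith
    set A : ℝ := 2 / ((m:ℝ) * ((m:ℝ)-1)) with hAdef
    have hA2 : A * ((m:ℝ) * ((m:ℝ)-1)) = 2 := by
      rw [hAdef]; exact div_mul_cancel₀ _ (ne_of_gt hMM)
    have hA0 : 0 < A := by rw [hAdef]; positivity
    -- candidate polynomial  A (t-1)(t-2m) + 1
    set P : Polynomial ℝ := Polynomial.C A * X ^ 2 + Polynomial.C (-A*(2*(m:ℝ)+1)) * X
        + Polynomial.C (A*(2*(m:ℝ))+1) with hP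
    have hPd : P.natDegree = 2 := quad_natDegree _ _ _ (ne_of_gt hA0)
    have hPb : ∀ j : ℕ, 1 ≤ j → j ≤ m + m → |P.eval (j:ℝ)| ≤ 1 := by
      intro j hj1 hj2
      have h1 : (1:ℝ) ≤ (j:ℝ) := by exact_mod_cast hj1
      have h2 : (j:ℝ) ≤ 2*(m:ℝ) := by
        have := (Nat.cast_le (α := ℝ)).2 hj2
        push_cast at this; linarith
      rw [hP, quad_eval', abs_le]
      have key : ((j:ℝ)-1)*(2*(m:ℝ) - j) ≤ (m:ℝ) * ((m:ℝ)-1) := by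
        rcases le_or_gt j m with h | h
        · have hjm : (j:ℝ) ≤ (m:ℝ) := by exact_mod_cast h
          nlinarith [mul_nonneg (by linarith : (0:ℝ) ≤ (m:ℝ) - j)
            (by linarith : (0:ℝ) ≤ (m:ℝ) + 1 - j)]
        · have hjm : (m:ℝ) + 1 ≤ (j:ℝ) := by exact_mod_cast h
          nlinarith [mul_nonneg (by linarith : (0:ℝ) ≤ (j:ℝ) - m)
            (by linarith : (0:ℝ) ≤ (j:ℝ) - m - 1)]
      constructor
      · nlinarith [mul_le_mul_of_nonneg_left key hA0.le]
      · nlinarith [mul_nonneg (mul_nonneg hA0.le (by linarith : (0:ℝ) ≤ (j:ℝ)-1))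
          (by linarith : (0:ℝ) ≤ 2*(m:ℝ) - j)]
    have hAa : A ≤ a := by
      have := hmax P hPd hPb
      rwa [quad_lead P hPd, quad_lead Q hd, quad_coeff2] at this
    -- evaluations at 1, m, m+1, 2m
    have e1 := hbQ 1 le_rfl (by omega)
    have e2 := hbQ m (by omega) (by omega)
    have e3 := hbQ (m+1) (by omega) (by omega)
    have e4 := hbQ (m+m) (by omega) le_rfl
    rw [quad_eval Q hd, abs_le] at e1 e2 e3 e4
    push_cast at e1 e2 e3 e4
    have hkey : a * (2*((m:ℝ) * ((m:ℝ)-1))) ≤ 4 := by linarith [e1.2, e4.2, e2.1, e3.1]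
    have haA : a = A := by
      refine le_antisymm ?_ hAa
      rw [hAdef, le_div_iff₀ hMM]
      linarith [hkey]
    have ham : a * ((m:ℝ) * ((m:ℝ)-1)) = 2 := by rw [haA]; exact hA2
    have hv1 : a + b + c = 1 := by
      linarith [e1.2, e2.1, e3.1, e4.2, ham]
    have hv4 : a * (2*(m:ℝ))^2 + b * (2*(m:ℝ)) + c = 1 := by
      linarith [e1.2, e2.1, e3.1, e4.2, ham]
    intro x
    rw [quad_eval Q hd]
    push_cast
    have hden : (0:ℝ) < ((m:ℝ)+(m:ℝ))*(((m:ℝ)+(m:ℝ))-2) :=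
      mul_pos (by linarith) (by linarith)
    have hD : (2:ℝ)/(((m:ℝ)+(m:ℝ))*(((m:ℝ)+(m:ℝ))-2)) = a/4 := by
      rw [div_eq_div_iff (ne_of_gt hden) (by norm_num : (4:ℝ) ≠ 0)]
      linarith [ham]
    rw [hD]
    linear_combination ((1-x)/2)*hv1 + ((x+1)/2)*hv4 + (x^2-1)*ham
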